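/- (Spectral estimate for the GenEO preconditioner with inexact coarse solve) Assume: ∑_{i=1}^N R_iᵀ D_i R_i = I; each R_i A R_iᵀ is symmetric positive definite; ‖∑_{i=1}^N R_iᵀ U_i‖_A² ≤ k₀ ∑_{i=1}^N ‖R_iᵀ U_i‖_A² for all U_i; there are linear maps π̃_j : ℝ^{n_j} → ℝ^{n_j} with range(R_jᵀ D_j π̃_j) ⊆ V₀ and ∑_{j=1}^N ⟨R_j A R_jᵀ D_j (I − π̃_j) R_j U, D_j (I − π̃_j) R_j U⟩ ≤ k₁ τ ⟨A U, U⟩ for all U; and μ′ ⟨Ẽ u, u⟩ ≤ ⟨E u, u⟩ ≤ μ ⟨Ẽ u, u⟩ for all u ∈ ℝᵐ, with μ, μ′ > 0. Set ε_A := ‖P₀ − P̃₀‖_A, c_T := μ′ / ( (1 + ε_A √(k₀ k₁ τ))² + μ′ k₁ τ ), c_R := [ k₀ (1 + ε_A²) + μ + √( (k₀ (1 + ε_A²) − μ)² + 4 μ k₀ ε_A² ) ] / 2, and define M⁻¹ := Z Ẽ⁻¹ Zᵀ + (I − P̃₀) ( ∑_{i=1}^N R_iᵀ (R_i A R_iᵀ)⁻¹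 R_i ) (I − P̃₀ᵀ). Then every eigenvalue λ of M⁻¹ A (i.e., every λ ∈ ℝ such that M⁻¹ A U = λ U for some U ≠ 0) satisfies c_T ≤ λ ≤ c_R. -/

import Mathlib

open Matrix

/-- The norm induced by an SPD matrix `A`: `‖x‖_A = √(⟨A x, x⟩)`. -/
noncomputable def aNorm {n : ℕ} (A : Matrix (Fin n) (Fin n) ℝ) (x : Fin n → ℝ) : ℝ :=
  Real.sqrt ((A *ᵥ x) ⬝ᵥ x)

/-- The operator norm of a matrix `M` induced by the `A`-norm. -/
noncomputable def aOpNorm {n : ℕ} (A M : Matrix (Fin n) (Fin n) ℝ) : ℝ :=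
  sSup { t : ℝ | ∃ x : Fin n → ℝ, x ≠ 0 ∧ t = aNorm A (M *ᵥ x) / aNorm A x }


section helpers

variable {a b : ℕ}

/-- move a transpose across a dot product -/
lemma dp_move (M : Matrix (Fin a) (Fin b) ℝ) (x : Fin a → ℝ) (y : Fin b → ℝ) :
    (Mᵀ *ᵥ x) ⬝ᵥ y = x ⬝ᵥ (M *ᵥ y) := by
  rw [mulVec_transpose, dotProduct_mulVec]

lemma dp_symm {n : ℕ} {A : Matrix (Fin n) (Fin n) ℝ} (hA : Aᵀ = A) (x y : Fin n → ℝ) :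
    (A *ᵥ x) ⬝ᵥ y = (A *ᵥ y) ⬝ᵥ x := by
  calc (A *ᵥ x) ⬝ᵥ y = (Aᵀ *ᵥ x) ⬝ᵥ y := by rw [hA]
    _ = x ⬝ᵥ (A *ᵥ y) := dp_move ..
    _ = (A *ᵥ y) ⬝ᵥ x := dotProduct_comm _ _

/-- Cauchy–Schwarz for a PSD bilinear form. -/
lemma cs_psd {n : ℕ} {A : Matrix (Fin n) (Fin n) ℝ} (hA : A.PosSemidef)
    (x y : Fin n → ℝ) : ((A *ᵥ x) ⬝ᵥ y) ^ 2 ≤ ((A *ᵥ x) ⬝ᵥ x) * ((A *ᵥ y) ⬝ᵥ y) := by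
  have hsym : Aᵀ = A := by
    have := hA.isHermitian
    simpa [Matrix.IsHermitian, conjTranspose_eq_transpose_of_trivial] using this
  have key : ∀ t : ℝ, 0 ≤ ((A *ᵥ y) ⬝ᵥ y) * (t * t) + (2 * ((A *ᵥ x) ⬝ᵥ y)) * t
      + ((A *ᵥ x) ⬝ᵥ x) := by
    intro t
    have h0 := hA.dotProduct_mulVec_nonneg (x + t • y)
    have hst : star (x + t • y) = x + t • y := by simp
    rw [hst] at h0
    have expand : (x + t • y) ⬝ᵥ (A *ᵥ (x + t • y))
        = ((A *ᵥ y) ⬝ᵥ y) * (t * t) + (2 * ((A *ᵥ x) ⬝ᵥ y)) * t + ((A *ᵥ x) ⬝ᵥ x) := by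
      rw [mulVec_add, mulVec_smul, dotProduct_add, add_dotProduct, add_dotProduct,
        smul_dotProduct, dotProduct_smul, smul_dotProduct, dotProduct_smul]
      have h1 : y ⬝ᵥ (A *ᵥ x) = (A *ᵥ x) ⬝ᵥ y := dotProduct_comm _ _
      have h2 : x ⬝ᵥ (A *ᵥ y) = (A *ᵥ x) ⬝ᵥ y := by
        rw [dotProduct_comm, dp_symm hsym]
      have h3 : x ⬝ᵥ (A *ᵥ x) = (A *ᵥ x) ⬝ᵥ x := dotProduct_comm _ _
      have h4 : y ⬝ᵥ (A *ᵥ y) = (A *ᵥ y) ⬝ᵥ y := dotProduct_comm _ _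
      simp only [smul_eq_mul]
      rw [h1, h2, h3, h4]; ring
    rw [expand] at h0; exact h0
  have hd := discrim_le_zero key
  unfold discrim at hd
  nlinarith [hd]

/-- two-factor Cauchy–Schwarz combination -/
lemma cs2 {c1 c2 t1 t2 e1 e2 : ℝ} (ht1 : 0 ≤ t1) (he1 : 0 ≤ e1) (ht2 : 0 ≤ t2)
    (he2 : 0 ≤ e2) (h1 : c1 ^ 2 ≤ t1 * e1) (h2 : c2 ^ 2 ≤ t2 * e2) :
    (c1 + c2) ^ 2 ≤ (t1 + t2) * (e1 + e2) := by
  nlinarith [sq_nonneg (t1 * e2 - t2 * e1), sq_nonneg (c1 * c2), sq_nonneg (c1 - c2),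
    sq_nonneg (c1 + c2), mul_nonneg ht1 he2, mul_nonneg ht2 he1, mul_nonneg ht1 he1,
    mul_nonneg ht2 he2, sq_nonneg (t1 * e2 + t2 * e1 - 2 * c1 * c2)]

lemma cs_sum {ι : Type*} (s : Finset ι) (c t e : ι → ℝ)
    (ht : ∀ i ∈ s, 0 ≤ t i) (he : ∀ i ∈ s, 0 ≤ e i)
    (h : ∀ i ∈ s, c i ^ 2 ≤ t i * e i) :
    (∑ i ∈ s, c i) ^ 2 ≤ (∑ i ∈ s, t i) * (∑ i ∈ s, e i) := by
  induction s using Finset.cons_induction with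
  | empty => simp
  | cons i s his ih =>
    simp only [Finset.sum_cons]
    exact cs2 (ht i (by simp)) (he i (by simp))
      (Finset.sum_nonneg fun j hj => ht j (by simp [hj]))
      (Finset.sum_nonneg fun j hj => he j (by simp [hj]))
      (h i (by simp))
      (ih (fun j hj => ht j (by simp [hj])) (fun j hj => he j (by simp [hj]))
        (fun j hj => h j (by simp [hj])))

end helpers

/-- Frobenius-type bound for Euclidean dot products. -/
lemma frob_bound {n : ℕ} (Nm : Matrix (Fin n) (Fin n) ℝ) (w : Fin n → ℝ) :
    (Nm *ᵥ w) ⬝ᵥ (Nm *ᵥ w) ≤ (∑ i, ∑ j, (Nm i j) ^ 2) * (w ⬝ᵥ w) := by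
  have hrow : ∀ i : Fin n, ((Nm *ᵥ w) i) ^ 2 ≤ (∑ j, (Nm i j) ^ 2) * (w ⬝ᵥ w) := by
    intro i
    have := Finset.sum_mul_sq_le_sq_mul_sq Finset.univ (fun j => Nm i j) w
    simpa [Matrix.mulVec, dotProduct, pow_two] using this
  calc (Nm *ᵥ w) ⬝ᵥ (Nm *ᵥ w) = ∑ i, ((Nm *ᵥ w) i) ^ 2 := by
        simp [dotProduct, pow_two]
    _ ≤ ∑ i : Fin n, (∑ j, (Nm i j) ^ 2) * (w ⬝ᵥ w) := Finset.sum_le_sum fun i _ => hrow i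
    _ = (∑ i, ∑ j, (Nm i j) ^ 2) * (w ⬝ᵥ w) := by rw [Finset.sum_mul]

open scoped MatrixOrder in
/-- generalized eigenvalue boundedness: the A-Rayleigh quotient of any matrix is bounded. -/
lemma exists_aBound {n : ℕ} {A : Matrix (Fin n) (Fin n) ℝ} (hA : A.PosDef)
    (M : Matrix (Fin n) (Fin n) ℝ) :
    ∃ C : ℝ, 0 ≤ C ∧ ∀ x : Fin n → ℝ,
      (A *ᵥ (M *ᵥ x)) ⬝ᵥ (M *ᵥ x) ≤ C * ((A *ᵥ x) ⬝ᵥ x) := by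
  set S := CFC.sqrt A with hSdef
  have hSS : S * S = A := CFC.sqrt_mul_sqrt_self A hA.posSemidef.nonneg
  have hSps : S.PosSemidef := (CFC.sqrt_nonneg A).posSemidef
  have hSsym : Sᵀ = S := by
    have := hSps.isHermitian
    simpa [Matrix.IsHermitian, conjTranspose_eq_transpose_of_trivial] using this
  have hdetA : IsUnit A.det := hA.det_pos.ne'.isUnit
  have hdetS : IsUnit S.det := by
    rw [← hSS, det_mul] at hdetA
    exact isUnit_of_mul_isUnit_left hdetA
  have hSinv : S⁻¹ * S = 1 := nonsing_inv_mul S hdetS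
  -- ⟨A u, u⟩ = ‖S u‖²
  have key : ∀ u : Fin n → ℝ, (A *ᵥ u) ⬝ᵥ u = (S *ᵥ u) ⬝ᵥ (S *ᵥ u) := by
    intro u
    calc (A *ᵥ u) ⬝ᵥ u = ((S * S) *ᵥ u) ⬝ᵥ u := by rw [hSS]
      _ = (S *ᵥ (S *ᵥ u)) ⬝ᵥ u := by rw [mulVec_mulVec]
      _ = (Sᵀ *ᵥ (S *ᵥ u)) ⬝ᵥ u := by rw [hSsym]
      _ = (S *ᵥ u) ⬝ᵥ (S *ᵥ u) := dp_move ..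
  refine ⟨∑ i, ∑ j, ((S * M * S⁻¹) i j) ^ 2, Finset.sum_nonneg fun i _ =>
    Finset.sum_nonneg fun j _ => sq_nonneg _, fun x => ?_⟩
  have hid : S *ᵥ (M *ᵥ x) = (S * M * S⁻¹) *ᵥ (S *ᵥ x) := by
    rw [mulVec_mulVec, mulVec_mulVec, mul_assoc (S * M) S⁻¹ S, hSinv, mul_one]
  rw [key, key, hid]
  have := frob_bound (S * M * S⁻¹) (S *ᵥ x)
  exact this


section anorm
variable {n : ℕ} {A : Matrix (Fin n) (Fin n) ℝ}

lemma dp_self_nonneg (hA : A.PosSemidef) (x : Fin n → ℝ) : 0 ≤ (A *ᵥ x) ⬝ᵥ x := by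
  have := hA.dotProduct_mulVec_nonneg x
  simpa [dotProduct_comm] using this

lemma aNorm_sq (hA : A.PosSemidef) (x : Fin n → ℝ) :
    (aNorm A x) ^ 2 = (A *ᵥ x) ⬝ᵥ x :=
  Real.sq_sqrt (dp_self_nonneg hA x)

lemma aNorm_nonneg (x : Fin n → ℝ) : 0 ≤ aNorm A x := Real.sqrt_nonneg _

lemma dp_self_pos (hA : A.PosDef) {x : Fin n → ℝ} (hx : x ≠ 0) : 0 < (A *ᵥ x) ⬝ᵥ x := by
  have := hA.dotProduct_mulVec_pos hx
  simpa [dotProduct_comm] using this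

lemma aNorm_pos (hA : A.PosDef) {x : Fin n → ℝ} (hx : x ≠ 0) : 0 < aNorm A x :=
  Real.sqrt_pos.mpr (dp_self_pos hA hx)

lemma aNorm_le_of_sq_le (hA : A.PosSemidef) {x : Fin n → ℝ} {r : ℝ} (hr : 0 ≤ r)
    (h : (A *ᵥ x) ⬝ᵥ x ≤ r ^ 2) : aNorm A x ≤ r := by
  rw [show r = Real.sqrt (r ^ 2) from (Real.sqrt_sq hr).symm]
  exact Real.sqrt_le_sqrt h

lemma aNorm_triangle (hA : A.PosSemidef) (hsym : Aᵀ = A) (x y : Fin n → ℝ) :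
    aNorm A (x + y) ≤ aNorm A x + aNorm A y := by
  apply aNorm_le_of_sq_le hA (add_nonneg (aNorm_nonneg x) (aNorm_nonneg y))
  have hcs : ((A *ᵥ x) ⬝ᵥ y) ^ 2 ≤ ((A *ᵥ x) ⬝ᵥ x) * ((A *ᵥ y) ⬝ᵥ y) := cs_psd hA x y
  have hxy : (A *ᵥ x) ⬝ᵥ y ≤ aNorm A x * aNorm A y := by
    have h1 : (A *ᵥ x) ⬝ᵥ y ≤ |(A *ᵥ x) ⬝ᵥ y| := le_abs_self _
    have h2 : |(A *ᵥ x) ⬝ᵥ y| ^ 2 ≤ (aNorm A x * aNorm A y) ^ 2 := by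
      rw [sq_abs, mul_pow, aNorm_sq hA, aNorm_sq hA]; exact hcs
    have h3 : |(A *ᵥ x) ⬝ᵥ y| ≤ aNorm A x * aNorm A y := by
      have hd : 0 ≤ aNorm A x * aNorm A y :=
        mul_nonneg (aNorm_nonneg x) (aNorm_nonneg y)
      nlinarith [abs_nonneg ((A *ᵥ x) ⬝ᵥ y)]
    exact h1.trans h3
  have expand : (A *ᵥ (x + y)) ⬝ᵥ (x + y)
      = (A *ᵥ x) ⬝ᵥ x + 2 * ((A *ᵥ x) ⬝ᵥ y) + (A *ᵥ y) ⬝ᵥ y := by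
    have h5 : (A *ᵥ y) ⬝ᵥ x = (A *ᵥ x) ⬝ᵥ y := dp_symm hsym y x
    simp only [mulVec_add, add_dotProduct, dotProduct_add]
    linarith [h5]
  rw [expand]
  have hx2 := aNorm_sq hA x
  have hy2 := aNorm_sq hA y
  nlinarith [aNorm_nonneg (A := A) x, aNorm_nonneg (A := A) y]

end anorm

section opnorm
variable {n : ℕ} {A : Matrix (Fin n) (Fin n) ℝ}

lemma aOpNorm_spec (hA : A.PosDef) (M : Matrix (Fin n) (Fin n) ℝ)
    (x0 : Fin n → ℝ) (hx0 : x0 ≠ 0) :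
    0 ≤ aOpNorm A M ∧ ∀ x : Fin n → ℝ, aNorm A (M *ᵥ x) ≤ aOpNorm A M * aNorm A x := by
  obtain ⟨C, hC0, hC⟩ := exists_aBound hA M
  set S := { t : ℝ | ∃ x : Fin n → ℝ, x ≠ 0 ∧ t = aNorm A (M *ᵥ x) / aNorm A x } with hS
  have hbdd : BddAbove S := by
    refine ⟨Real.sqrt C, fun t ht => ?_⟩
    obtain ⟨x, hx, rfl⟩ := ht
    have hax : 0 < aNorm A x := aNorm_pos hA hx
    rw [div_le_iff₀ hax]
    apply aNorm_le_of_sq_le hA.posSemidef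
      (mul_nonneg (Real.sqrt_nonneg _) (aNorm_nonneg _))
    have : (Real.sqrt C * aNorm A x) ^ 2 = C * ((A *ᵥ x) ⬝ᵥ x) := by
      rw [mul_pow, Real.sq_sqrt hC0, aNorm_sq hA.posSemidef]
    rw [this]
    exact hC x
  have hmem : ∀ x : Fin n → ℝ, x ≠ 0 →
      aNorm A (M *ᵥ x) / aNorm A x ≤ aOpNorm A M := by
    intro x hx
    exact le_csSup hbdd ⟨x, hx, rfl⟩
  have hnn : 0 ≤ aOpNorm A M := by
    refine le_trans ?_ (hmem x0 hx0)
    exact div_nonneg (aNorm_nonneg _) (aNorm_nonneg _)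
  refine ⟨hnn, fun x => ?_⟩
  by_cases hx : x = 0
  · subst hx
    simp only [mulVec_zero]
    have : aNorm A (0 : Fin n → ℝ) = 0 := by
      simp [aNorm]
    rw [this, mul_zero]
  · have hax : 0 < aNorm A x := aNorm_pos hA hx
    have := hmem x hx
    rw [div_le_iff₀ hax] at this
    exact this

end opnorm

section inveq

lemma inv_spectral {m : ℕ} {E Et : Matrix (Fin m) (Fin m) ℝ} (hE : E.PosDef) (hEt : Et.PosDef)
    {μ : ℝ} (hμ : 0 < μ) (h : ∀ u : Fin m → ℝ, (E *ᵥ u) ⬝ᵥ u ≤ μ * ((Et *ᵥ u) ⬝ᵥ u)) :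
    ∀ u : Fin m → ℝ, (Et⁻¹ *ᵥ u) ⬝ᵥ u ≤ μ * ((E⁻¹ *ᵥ u) ⬝ᵥ u) := by
  intro u
  have hdE : IsUnit E.det := hE.det_pos.ne'.isUnit
  have hdEt : IsUnit Et.det := hEt.det_pos.ne'.isUnit
  have hEinv : E * E⁻¹ = 1 := mul_nonsing_inv E hdE
  have hEtinv : Et * Et⁻¹ = 1 := mul_nonsing_inv Et hdEt
  set p := E⁻¹ *ᵥ u with hp
  set q := Et⁻¹ *ᵥ u with hq
  have hup : E *ᵥ p = u := by rw [hp, mulVec_mulVec, hEinv, one_mulVec]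
  have huq : Et *ᵥ q = u := by rw [hq, mulVec_mulVec, hEtinv, one_mulVec]
  have hT : (Et⁻¹ *ᵥ u) ⬝ᵥ u = (E *ᵥ p) ⬝ᵥ q := by
    rw [hup, dotProduct_comm]
  have hG : (E *ᵥ p) ⬝ᵥ p = (E⁻¹ *ᵥ u) ⬝ᵥ u := by rw [hup, dotProduct_comm]
  have hcs := cs_psd hE.posSemidef p q
  have hq2 : (E *ᵥ q) ⬝ᵥ q ≤ μ * ((Et⁻¹ *ᵥ u) ⬝ᵥ u) := by
    have := h q
    rwa [huq, dotProduct_comm u q] at this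
  have hTnn : 0 ≤ (Et⁻¹ *ᵥ u) ⬝ᵥ u := by
    have : Et⁻¹.PosSemidef := hEt.posSemidef.inv
    exact dp_self_nonneg this u
  have hGnn : 0 ≤ (E⁻¹ *ᵥ u) ⬝ᵥ u := by
    have : E⁻¹.PosSemidef := hE.posSemidef.inv
    exact dp_self_nonneg this u
  -- T^2 ≤ G * (μ T)
  have key : ((Et⁻¹ *ᵥ u) ⬝ᵥ u) ^ 2 ≤ ((E⁻¹ *ᵥ u) ⬝ᵥ u) * (μ * ((Et⁻¹ *ᵥ u) ⬝ᵥ u)) := by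
    calc ((Et⁻¹ *ᵥ u) ⬝ᵥ u) ^ 2 = ((E *ᵥ p) ⬝ᵥ q) ^ 2 := by rw [hT]
      _ ≤ ((E *ᵥ p) ⬝ᵥ p) * ((E *ᵥ q) ⬝ᵥ q) := hcs
      _ ≤ ((E⁻¹ *ᵥ u) ⬝ᵥ u) * (μ * ((Et⁻¹ *ᵥ u) ⬝ᵥ u)) := by
          rw [hG]
          exact mul_le_mul_of_nonneg_left hq2 hGnn
  rcases eq_or_lt_of_le hTnn with hT0 | hT0
  · rw [← hT0]; positivity
  · nlinarith [key]

end inveq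

section more
variable {a b : ℕ}

lemma dp_move' (M : Matrix (Fin a) (Fin b) ℝ) (x : Fin b → ℝ) (y : Fin a → ℝ) :
    (M *ᵥ x) ⬝ᵥ y = x ⬝ᵥ (Mᵀ *ᵥ y) := by
  have := dp_move Mᵀ x y
  rwa [transpose_transpose] at this

lemma dp_Amove {n : ℕ} {A : Matrix (Fin n) (Fin n) ℝ} (hA : Aᵀ = A) (x y : Fin n → ℝ) :
    x ⬝ᵥ (A *ᵥ y) = (A *ᵥ x) ⬝ᵥ y := by
  rw [dotProduct_comm, dp_symm hA]

lemma sum_mulVec' {ι : Type*} (s : Finset ι) (M : ι → Matrix (Fin a) (Fin b) ℝ)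
    (v : Fin b → ℝ) : (∑ i ∈ s, M i) *ᵥ v = ∑ i ∈ s, (M i *ᵥ v) := by
  induction s using Finset.cons_induction with
  | empty => simp
  | cons i s his ih => simp [Finset.sum_cons, add_mulVec, ih]

lemma sum_dotProduct' {ι : Type*} (s : Finset ι) (f : ι → (Fin a → ℝ)) (v : Fin a → ℝ) :
    (∑ i ∈ s, f i) ⬝ᵥ v = ∑ i ∈ s, (f i ⬝ᵥ v) := by
  induction s using Finset.cons_induction with
  | empty => simp
  | cons i s his ih => simp [Finset.sum_cons, add_dotProduct, ih]

lemma aNorm_neg {n : ℕ} (A : Matrix (Fin n) (Fin n) ℝ) (x : Fin n → ℝ) :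
    aNorm A (-x) = aNorm A x := by
  simp [aNorm, mulVec_neg, dotProduct_neg, neg_dotProduct]

lemma aNorm_sub_le {n : ℕ} {A : Matrix (Fin n) (Fin n) ℝ} (hA : A.PosSemidef)
    (hsym : Aᵀ = A) (x y : Fin n → ℝ) :
    aNorm A (x - y) ≤ aNorm A x + aNorm A y := by
  have := aNorm_triangle hA hsym x (-y)
  rw [aNorm_neg] at this
  simpa [sub_eq_add_neg] using this

end more
section extra
variable {a b : ℕ}

lemma mulVec_sum' {ι : Type*} (s : Finset ι) (M : Matrix (Fin a) (Fin b) ℝ)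
    (f : ι → Fin b → ℝ) : M *ᵥ (∑ i ∈ s, f i) = ∑ i ∈ s, M *ᵥ (f i) := by
  induction s using Finset.cons_induction with
  | empty => simp
  | cons i s his ih => simp [Finset.sum_cons, mulVec_add, ih]

lemma dotProduct_sum' {ι : Type*} (s : Finset ι) (v : Fin a → ℝ)
    (f : ι → Fin a → ℝ) : v ⬝ᵥ (∑ i ∈ s, f i) = ∑ i ∈ s, v ⬝ᵥ (f i) := by
  induction s using Finset.cons_induction with
  | empty => simp
  | cons i s his ih => simp [Finset.sum_cons, dotProduct_add, ih]

lemma rar {n c : ℕ} (A : Matrix (Fin n) (Fin n) ℝ) (R : Matrix (Fin c) (Fin n) ℝ)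
    (x : Fin c → ℝ) :
    (A *ᵥ (Rᵀ *ᵥ x)) ⬝ᵥ (Rᵀ *ᵥ x) = ((R * A * Rᵀ) *ᵥ x) ⬝ᵥ x := by
  rw [dotProduct_comm, dp_move R, mulVec_mulVec, mulVec_mulVec, dotProduct_comm]

end extra
set_option maxHeartbeats 2000000 in
/-- Spectral estimate for the GenEO preconditioner with inexact coarse solve:
under partition of unity, SPD local matrices `R_i A R_iᵀ`, the `k₀`-bound, the GenEO bound
with maps `π̃_j` whose coarse components lie in `V₀`, and spectral equivalence
`μ′ ⟨Ẽ u, u⟩ ≤ ⟨E u, u⟩ ≤ μ ⟨Ẽ u, u⟩`, every eigenvalue `λ` of `M⁻¹ A`, where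
`M⁻¹ := Z Ẽ⁻¹ Zᵀ + (I − P̃₀)(∑ R_iᵀ (R_i A R_iᵀ)⁻¹ R_i)(I − P̃₀ᵀ)`,
satisfies `c_T ≤ λ ≤ c_R`. -/
theorem stmt9 {n m N : ℕ} (A : Matrix (Fin n) (Fin n) ℝ) (hA : A.PosDef)
    (Z : Matrix (Fin n) (Fin m) ℝ) (hZ : LinearIndependent ℝ Zᵀ)
    (Et : Matrix (Fin m) (Fin m) ℝ) (hEt : Et.PosDef)
    (nd : Fin N → ℕ)
    (R : ∀ i : Fin N, Matrix (Fin (nd i)) (Fin n) ℝ)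
    (D : ∀ i : Fin N, Matrix (Fin (nd i)) (Fin (nd i)) ℝ)
    (hD : ∀ i, (D i).IsDiag)
    (hRARt : ∀ i, (R i * A * (R i)ᵀ).PosDef)
    (k₀ k₁ τ μ μ' : ℝ) (hk₀ : 0 < k₀) (hk₁ : 0 < k₁) (hτ : 0 < τ)
    (hμ : 0 < μ) (hμ' : 0 < μ')
    (hPOU : ∑ i, (R i)ᵀ * D i * R i = (1 : Matrix (Fin n) (Fin n) ℝ))
    (hk₀bound : ∀ U : ∀ i : Fin N, Fin (nd i) → ℝ,
      (A *ᵥ (∑ i, (R i)ᵀ *ᵥ U i)) ⬝ᵥ (∑ i, (R i)ᵀ *ᵥ U i)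
        ≤ k₀ * ∑ i, (A *ᵥ ((R i)ᵀ *ᵥ U i)) ⬝ᵥ ((R i)ᵀ *ᵥ U i))
    (π : ∀ j : Fin N, Matrix (Fin (nd j)) (Fin (nd j)) ℝ)
    (hπV₀ : ∀ j (v : Fin (nd j) → ℝ),
      ((R j)ᵀ * D j * π j) *ᵥ v ∈ Set.range (fun β : Fin m → ℝ => Z *ᵥ β))
    (hGenEO : ∀ U : Fin n → ℝ,
      ∑ j, ((R j * A * (R j)ᵀ) *ᵥ ((D j) *ᵥ ((1 - π j) *ᵥ ((R j) *ᵥ U)))) ⬝ᵥ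
          ((D j) *ᵥ ((1 - π j) *ᵥ ((R j) *ᵥ U)))
        ≤ k₁ * τ * ((A *ᵥ U) ⬝ᵥ U))
    (hEμ : ∀ u : Fin m → ℝ,
      μ' * ((Et *ᵥ u) ⬝ᵥ u) ≤ ((Zᵀ * A * Z) *ᵥ u) ⬝ᵥ u
        ∧ ((Zᵀ * A * Z) *ᵥ u) ⬝ᵥ u ≤ μ * ((Et *ᵥ u) ⬝ᵥ u))
    (εA cT cR : ℝ)
    (hεA : εA = aOpNorm A (Z * (Zᵀ * A * Z)⁻¹ * Zᵀ * A - Z * Et⁻¹ * Zᵀ * A))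
    (hcT : cT = μ' / ((1 + εA * Real.sqrt (k₀ * k₁ * τ)) ^ 2 + μ' * k₁ * τ))
    (hcR : cR = (k₀ * (1 + εA ^ 2) + μ
        + Real.sqrt ((k₀ * (1 + εA ^ 2) - μ) ^ 2 + 4 * μ * k₀ * εA ^ 2)) / 2) :
    ∀ (lam : ℝ) (U : Fin n → ℝ), U ≠ 0 →
      ((Z * Et⁻¹ * Zᵀ
          + (1 - Z * Et⁻¹ * Zᵀ * A) * (∑ i, (R i)ᵀ * (R i * A * (R i)ᵀ)⁻¹ * R i) *
            (1 - (Z * Et⁻¹ * Zᵀ * A)ᵀ)) * A) *ᵥ U = lam • U →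
      cT ≤ lam ∧ lam ≤ cR := by
  intro lam U hU hEig
  classical
  -- ## basic facts
  have hAsym : Aᵀ = A := by
    have := hA.isHermitian
    simpa [Matrix.IsHermitian, conjTranspose_eq_transpose_of_trivial] using this
  have hApsd := hA.posSemidef
  have hEtsym : Etᵀ = Et := by
    have := hEt.isHermitian
    simpa [Matrix.IsHermitian, conjTranspose_eq_transpose_of_trivial] using this
  have hEpd : (Zᵀ * A * Z).PosDef := by
    refine Matrix.PosDef.of_dotProduct_mulVec_pos ?_ ?_
    · rw [Matrix.IsHermitian, conjTranspose_eq_transpose_of_trivial]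
      simp [transpose_mul, hAsym, Matrix.mul_assoc]
    · intro x hx
      have h1 := (hEμ x).1
      have h2 : 0 < (Et *ᵥ x) ⬝ᵥ x := by
        have := hEt.dotProduct_mulVec_pos hx
        simpa [dotProduct_comm] using this
      have h3 : 0 < ((Zᵀ * A * Z) *ᵥ x) ⬝ᵥ x := by nlinarith
      simpa [dotProduct_comm] using h3
  have hEdet : IsUnit (Zᵀ * A * Z).det := hEpd.det_pos.ne'.isUnit
  have hEtdet : IsUnit Et.det := hEt.det_pos.ne'.isUnit
  have hEc : (Zᵀ * A * Z) * (Zᵀ * A * Z)⁻¹ = 1 := mul_nonsing_inv _ hEdet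
  have hEc' : (Zᵀ * A * Z)⁻¹ * (Zᵀ * A * Z) = 1 := nonsing_inv_mul _ hEdet
  have hEtc : Et * Et⁻¹ = 1 := mul_nonsing_inv _ hEtdet
  have hEtinvsym : (Et⁻¹)ᵀ = Et⁻¹ := by rw [transpose_nonsing_inv, hEtsym]
  have hSdet : ∀ i, IsUnit (R i * A * (R i)ᵀ).det := fun i => (hRARt i).det_pos.ne'.isUnit
  have hSc : ∀ i, (R i * A * (R i)ᵀ) * (R i * A * (R i)ᵀ)⁻¹ = 1 :=
    fun i => mul_nonsing_inv _ (hSdet i)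
  set w : Fin n → ℝ := A *ᵥ U with hw
  have hLam : 0 < w ⬝ᵥ U := by rw [hw]; exact dp_self_pos hA hU
  set v : Fin n → ℝ := w - A *ᵥ ((Z * Et⁻¹ * Zᵀ) *ᵥ w) with hv
  -- ## the eigen-identity:  T₁ + T₂ = lam * ⟨A U, U⟩
  have hQAt : (Z * Et⁻¹ * Zᵀ * A)ᵀ = A * (Z * Et⁻¹ * Zᵀ) := by
    simp [transpose_mul, hAsym, hEtinvsym, Matrix.mul_assoc]
  have hQv : (1 - (Z * Et⁻¹ * Zᵀ * A)ᵀ) *ᵥ w = v := by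
    rw [hQAt, sub_mulVec, one_mulVec, hv, ← mulVec_mulVec]
  have hMain : (Et⁻¹ *ᵥ (Zᵀ *ᵥ w)) ⬝ᵥ (Zᵀ *ᵥ w)
      + (∑ i, ((R i * A * (R i)ᵀ)⁻¹ *ᵥ (R i *ᵥ v)) ⬝ᵥ (R i *ᵥ v)) = lam * (w ⬝ᵥ U) := by
    have h0 : (((Z * Et⁻¹ * Zᵀ
        + (1 - Z * Et⁻¹ * Zᵀ * A) * (∑ i, (R i)ᵀ * (R i * A * (R i)ᵀ)⁻¹ * R i) *
          (1 - (Z * Et⁻¹ * Zᵀ * A)ᵀ)) * A) *ᵥ U) ⬝ᵥ w = lam * (U ⬝ᵥ w) := by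
      rw [hEig, smul_dotProduct, smul_eq_mul]
    rw [← mulVec_mulVec, ← hw, add_mulVec, add_dotProduct] at h0
    have hterm1 : ((Z * Et⁻¹ * Zᵀ) *ᵥ w) ⬝ᵥ w = (Et⁻¹ *ᵥ (Zᵀ *ᵥ w)) ⬝ᵥ (Zᵀ *ᵥ w) := by
      rw [← mulVec_mulVec, ← mulVec_mulVec, dp_move' Z]
    have hterm2 : (((1 - Z * Et⁻¹ * Zᵀ * A) * (∑ i, (R i)ᵀ * (R i * A * (R i)ᵀ)⁻¹ * R i) *
          (1 - (Z * Et⁻¹ * Zᵀ * A)ᵀ)) *ᵥ w) ⬝ᵥ w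
        = ∑ i, ((R i * A * (R i)ᵀ)⁻¹ *ᵥ (R i *ᵥ v)) ⬝ᵥ (R i *ᵥ v) := by
      rw [← mulVec_mulVec, ← mulVec_mulVec, hQv, dp_move' (1 - Z * Et⁻¹ * Zᵀ * A)]
      have htr : (1 - Z * Et⁻¹ * Zᵀ * A)ᵀ *ᵥ w = v := by
        rw [transpose_sub, transpose_one]
        exact hQv
      rw [htr, sum_mulVec', sum_dotProduct']
      refine Finset.sum_congr rfl fun i _ => ?_
      rw [← mulVec_mulVec, ← mulVec_mulVec, dp_move (R i), dotProduct_comm]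
    rw [hterm1, hterm2] at h0
    rw [dotProduct_comm U w] at h0
    exact h0
  -- ## projection infrastructure
  set prj : (Fin n → ℝ) → (Fin n → ℝ) :=
      fun x => Z *ᵥ ((Zᵀ * A * Z)⁻¹ *ᵥ (Zᵀ *ᵥ (A *ᵥ x))) with hprj
  have hprj' : ∀ x, prj x = Z *ᵥ ((Zᵀ * A * Z)⁻¹ *ᵥ (Zᵀ *ᵥ (A *ᵥ x))) := fun x => by rw [hprj]
  have hKey1 : ∀ x : Fin m → ℝ, (Zᵀ * A * Z) *ᵥ ((Zᵀ * A * Z)⁻¹ *ᵥ x) = x := fun x => by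
    rw [mulVec_mulVec, hEc, one_mulVec]
  have hKey2 : ∀ x : Fin m → ℝ, (Zᵀ * A * Z)⁻¹ *ᵥ ((Zᵀ * A * Z) *ᵥ x) = x := fun x => by
    rw [mulVec_mulVec, hEc', one_mulVec]
  have hZAprj : ∀ x, Zᵀ *ᵥ (A *ᵥ prj x) = Zᵀ *ᵥ (A *ᵥ x) := by
    intro x
    rw [hprj', mulVec_mulVec, mulVec_mulVec, hKey1]
  have hZAperp : ∀ x, Zᵀ *ᵥ (A *ᵥ (x - prj x)) = 0 := by
    intro x; rw [mulVec_sub, mulVec_sub, hZAprj, sub_self]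
  have horth : ∀ (x : Fin n → ℝ) (γ : Fin m → ℝ), (A *ᵥ (Z *ᵥ γ)) ⬝ᵥ (x - prj x) = 0 := by
    intro x γ
    rw [dp_symm hAsym, dotProduct_comm, dp_move' Z, hZAperp, dotProduct_zero]
  have hprjZ : ∀ γ : Fin m → ℝ, prj (Z *ᵥ γ) = Z *ᵥ γ := by
    intro γ
    have hinner : Zᵀ *ᵥ (A *ᵥ (Z *ᵥ γ)) = (Zᵀ * A * Z) *ᵥ γ := by
      rw [mulVec_mulVec, mulVec_mulVec]
    rw [hprj', hinner, hKey2]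
  have hprjsub : ∀ x y, prj (x - y) = prj x - prj y := by
    intro x y; simp only [hprj', mulVec_sub]
  have hproj_split : ∀ x : Fin n → ℝ,
      (A *ᵥ x) ⬝ᵥ x = (A *ᵥ prj x) ⬝ᵥ (prj x) + (A *ᵥ (x - prj x)) ⬝ᵥ (x - prj x) := by
    intro x
    have hx : prj x + (x - prj x) = x := by abel
    have hcross : (A *ᵥ prj x) ⬝ᵥ (x - prj x) = 0 := by
      have h := horth x ((Zᵀ * A * Z)⁻¹ *ᵥ (Zᵀ *ᵥ (A *ᵥ x)))
      rwa [← hprj'] at h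
    have hcross2 : (A *ᵥ (x - prj x)) ⬝ᵥ (prj x) = 0 := by
      rw [dp_symm hAsym]; exact hcross
    calc (A *ᵥ x) ⬝ᵥ x
        = (A *ᵥ (prj x + (x - prj x))) ⬝ᵥ (prj x + (x - prj x)) := by rw [hx]
      _ = _ := by
        rw [mulVec_add, add_dotProduct, dotProduct_add, dotProduct_add]
        linarith [hcross, hcross2]
  have hprj_contract : ∀ x, (A *ᵥ prj x) ⬝ᵥ (prj x) ≤ (A *ᵥ x) ⬝ᵥ x := by
    intro x
    have h1 := hproj_split x
    have h2 := dp_self_nonneg hApsd (x - prj x)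
    linarith
  -- ## εA facts
  set Dm : Matrix (Fin n) (Fin n) ℝ := Z * (Zᵀ * A * Z)⁻¹ * Zᵀ * A - Z * Et⁻¹ * Zᵀ * A with hDm
  have hεspec := aOpNorm_spec hA Dm U hU
  rw [← hεA] at hεspec
  obtain ⟨hε0, hεb⟩ := hεspec
  have hDmx : ∀ x, Dm *ᵥ x = prj x - (Z * Et⁻¹ * Zᵀ) *ᵥ (A *ᵥ x) := by
    intro x
    rw [hDm, sub_mulVec, hprj']
    congr 1
    · conv_rhs => rw [mulVec_mulVec, mulVec_mulVec, mulVec_mulVec]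
    · conv_rhs => rw [mulVec_mulVec]
  have hDmZ : ∀ x, Dm *ᵥ x
      = Z *ᵥ ((Zᵀ * A * Z)⁻¹ *ᵥ (Zᵀ *ᵥ (A *ᵥ x)) - Et⁻¹ *ᵥ (Zᵀ *ᵥ (A *ᵥ x))) := by
    intro x
    rw [hDm, sub_mulVec, mulVec_sub]
    congr 1
    · conv_rhs => rw [mulVec_mulVec, mulVec_mulVec, mulVec_mulVec]
    · conv_rhs => rw [mulVec_mulVec, mulVec_mulVec, mulVec_mulVec]
  have hDmkill : ∀ x, Dm *ᵥ (x - prj x) = 0 := by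
    intro x
    rw [hDmZ, hZAperp]
    simp
  -- ## upper bound
  have hp : prj U = Z *ᵥ ((Zᵀ * A * Z)⁻¹ *ᵥ (Zᵀ *ᵥ w)) := by rw [hprj', ← hw]
  have hT1le : (Et⁻¹ *ᵥ (Zᵀ *ᵥ w)) ⬝ᵥ (Zᵀ *ᵥ w) ≤ μ * ((A *ᵥ prj U) ⬝ᵥ (prj U)) := by
    have hinv := inv_spectral hEpd hEt hμ (fun x => (hEμ x).2) (Zᵀ *ᵥ w)
    have h2 : Zᵀ *ᵥ (A *ᵥ prj U) = Zᵀ *ᵥ w := by rw [hZAprj, ← hw]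
    have hid : ((Zᵀ * A * Z)⁻¹ *ᵥ (Zᵀ *ᵥ w)) ⬝ᵥ (Zᵀ *ᵥ w) = (A *ᵥ prj U) ⬝ᵥ (prj U) := by
      calc ((Zᵀ * A * Z)⁻¹ *ᵥ (Zᵀ *ᵥ w)) ⬝ᵥ (Zᵀ *ᵥ w)
          = ((Zᵀ * A * Z)⁻¹ *ᵥ (Zᵀ *ᵥ w)) ⬝ᵥ (Zᵀ *ᵥ (A *ᵥ prj U)) := by rw [h2]
        _ = (Z *ᵥ ((Zᵀ * A * Z)⁻¹ *ᵥ (Zᵀ *ᵥ w))) ⬝ᵥ (A *ᵥ prj U) := (dp_move' Z _ _).symm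
        _ = (prj U) ⬝ᵥ (A *ᵥ prj U) := by rw [← hp]
        _ = (A *ᵥ prj U) ⬝ᵥ (prj U) := dotProduct_comm _ _
    rw [← hid]
    exact hinv
  set y : Fin n → ℝ := U - (Z * Et⁻¹ * Zᵀ) *ᵥ w with hy
  have hvA : v = A *ᵥ y := by rw [hv, hy, mulVec_sub, ← hw]
  have hT2nn : 0 ≤ ∑ i, ((R i * A * (R i)ᵀ)⁻¹ *ᵥ (R i *ᵥ v)) ⬝ᵥ (R i *ᵥ v) :=
    Finset.sum_nonneg fun i _ => dp_self_nonneg ((hRARt i).posSemidef.inv) _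
  have hSUieq : ∀ i, (A *ᵥ ((R i)ᵀ *ᵥ ((R i * A * (R i)ᵀ)⁻¹ *ᵥ (R i *ᵥ v)))) ⬝ᵥ
        ((R i)ᵀ *ᵥ ((R i * A * (R i)ᵀ)⁻¹ *ᵥ (R i *ᵥ v)))
      = ((R i * A * (R i)ᵀ)⁻¹ *ᵥ (R i *ᵥ v)) ⬝ᵥ (R i *ᵥ v) := by
    intro i
    rw [rar, mulVec_mulVec, hSc i, one_mulVec, dotProduct_comm]
  have hT2G : (∑ i, ((R i * A * (R i)ᵀ)⁻¹ *ᵥ (R i *ᵥ v)) ⬝ᵥ (R i *ᵥ v))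
      = (A *ᵥ y) ⬝ᵥ (∑ i, (R i)ᵀ *ᵥ ((R i * A * (R i)ᵀ)⁻¹ *ᵥ (R i *ᵥ v))) := by
    rw [dotProduct_sum']
    refine Finset.sum_congr rfl fun i _ => ?_
    rw [dotProduct_comm (A *ᵥ y), dp_move (R i), ← hvA, dotProduct_comm]
  have hk0G : (A *ᵥ (∑ i, (R i)ᵀ *ᵥ ((R i * A * (R i)ᵀ)⁻¹ *ᵥ (R i *ᵥ v)))) ⬝ᵥ
        (∑ i, (R i)ᵀ *ᵥ ((R i * A * (R i)ᵀ)⁻¹ *ᵥ (R i *ᵥ v)))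
      ≤ k₀ * ∑ i, ((R i * A * (R i)ᵀ)⁻¹ *ᵥ (R i *ᵥ v)) ⬝ᵥ (R i *ᵥ v) := by
    have h := hk₀bound (fun i => (R i * A * (R i)ᵀ)⁻¹ *ᵥ (R i *ᵥ v))
    calc (A *ᵥ (∑ i, (R i)ᵀ *ᵥ ((R i * A * (R i)ᵀ)⁻¹ *ᵥ (R i *ᵥ v)))) ⬝ᵥ
        (∑ i, (R i)ᵀ *ᵥ ((R i * A * (R i)ᵀ)⁻¹ *ᵥ (R i *ᵥ v)))
        ≤ k₀ * ∑ i, (A *ᵥ ((R i)ᵀ *ᵥ ((R i * A * (R i)ᵀ)⁻¹ *ᵥ (R i *ᵥ v)))) ⬝ᵥ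
            ((R i)ᵀ *ᵥ ((R i * A * (R i)ᵀ)⁻¹ *ᵥ (R i *ᵥ v))) := h
      _ = k₀ * ∑ i, ((R i * A * (R i)ᵀ)⁻¹ *ᵥ (R i *ᵥ v)) ⬝ᵥ (R i *ᵥ v) := by
          rw [Finset.sum_congr rfl (fun i _ => hSUieq i)]
  have hT2le : (∑ i, ((R i * A * (R i)ᵀ)⁻¹ *ᵥ (R i *ᵥ v)) ⬝ᵥ (R i *ᵥ v))
      ≤ k₀ * ((A *ᵥ y) ⬝ᵥ y) := by
    rcases eq_or_lt_of_le hT2nn with h0 | h0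
    · rw [← h0]
      exact mul_nonneg hk₀.le (dp_self_nonneg hApsd y)
    · have hcs := cs_psd hApsd y (∑ i, (R i)ᵀ *ᵥ ((R i * A * (R i)ᵀ)⁻¹ *ᵥ (R i *ᵥ v)))
      rw [← hT2G] at hcs
      nlinarith [hk0G, dp_self_nonneg hApsd y, h0]
  have hyqd : y = (U - prj U) + Dm *ᵥ (prj U) := by
    have h1 : Dm *ᵥ U = Dm *ᵥ (prj U) := by
      have h := hDmkill U
      rw [mulVec_sub] at h
      exact sub_eq_zero.mp h
    have h2 : Dm *ᵥ U = prj U - (Z * Et⁻¹ * Zᵀ) *ᵥ w := by rw [hDmx U, ← hw]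
    rw [hy, ← h1, h2]
    abel
  have hdA : (A *ᵥ (Dm *ᵥ prj U)) ⬝ᵥ (Dm *ᵥ prj U) ≤ εA ^ 2 * ((A *ᵥ prj U) ⬝ᵥ (prj U)) := by
    have h1 := hεb (prj U)
    have h2 := pow_le_pow_left₀ (aNorm_nonneg _) h1 2
    rw [aNorm_sq hApsd, mul_pow, aNorm_sq hApsd] at h2
    exact h2
  have hdorth : (A *ᵥ (Dm *ᵥ prj U)) ⬝ᵥ (U - prj U) = 0 := by
    rw [hDmZ]
    exact horth U _
  have hAyle : (A *ᵥ y) ⬝ᵥ y ≤ (A *ᵥ (U - prj U)) ⬝ᵥ (U - prj U)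
      + εA ^ 2 * ((A *ᵥ prj U) ⬝ᵥ (prj U)) := by
    rw [hyqd, mulVec_add, add_dotProduct, dotProduct_add, dotProduct_add]
    have hc1 : (A *ᵥ (U - prj U)) ⬝ᵥ (Dm *ᵥ prj U) = 0 := by
      rw [dp_symm hAsym]; exact hdorth
    linarith [hdA, hdorth, hc1]
  have hsplitU : w ⬝ᵥ U = (A *ᵥ prj U) ⬝ᵥ (prj U)
      + (A *ᵥ (U - prj U)) ⬝ᵥ (U - prj U) := by
    conv_lhs => rw [hw]
    exact hproj_split U
  have hupper : lam * (w ⬝ᵥ U) ≤ (μ + k₀ * εA ^ 2) * ((A *ᵥ prj U) ⬝ᵥ (prj U))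
      + k₀ * ((A *ᵥ (U - prj U)) ⬝ᵥ (U - prj U)) := by
    rw [← hMain]
    have h3 := mul_le_mul_of_nonneg_left hAyle hk₀.le
    linarith [hT1le, hT2le]
  -- cR algebra
  have hdiscnn : 0 ≤ (k₀ * (1 + εA ^ 2) - μ) ^ 2 + 4 * μ * k₀ * εA ^ 2 := by positivity
  have hs2 : (Real.sqrt ((k₀ * (1 + εA ^ 2) - μ) ^ 2 + 4 * μ * k₀ * εA ^ 2)) ^ 2
      = (k₀ * (1 + εA ^ 2) - μ) ^ 2 + 4 * μ * k₀ * εA ^ 2 := Real.sq_sqrt hdiscnn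
  have hsnn := Real.sqrt_nonneg ((k₀ * (1 + εA ^ 2) - μ) ^ 2 + 4 * μ * k₀ * εA ^ 2)
  have hsqrt_ge : ∀ t : ℝ, t ^ 2 ≤ (k₀ * (1 + εA ^ 2) - μ) ^ 2 + 4 * μ * k₀ * εA ^ 2 →
      t ≤ Real.sqrt ((k₀ * (1 + εA ^ 2) - μ) ^ 2 + 4 * μ * k₀ * εA ^ 2) := by
    intro t ht
    by_cases h : t ≤ 0
    · linarith
    · have := Real.sqrt_le_sqrt ht
      rwa [Real.sqrt_sq (by linarith)] at this
  have hcRk : k₀ ≤ cR := by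
    rw [hcR]
    have := hsqrt_ge (k₀ - μ - k₀ * εA ^ 2) (by nlinarith [sq_nonneg (k₀ * εA)])
    linarith
  have hcRμ : μ + k₀ * εA ^ 2 ≤ cR := by
    rw [hcR]
    have := hsqrt_ge (μ + k₀ * εA ^ 2 - k₀) (by nlinarith [sq_nonneg (k₀ * εA)])
    linarith
  have hfinR : lam ≤ cR := by
    have ha2nn : 0 ≤ (A *ᵥ prj U) ⬝ᵥ (prj U) := dp_self_nonneg hApsd _
    have hb2nn : 0 ≤ (A *ᵥ (U - prj U)) ⬝ᵥ (U - prj U) := dp_self_nonneg hApsd _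
    nlinarith [mul_le_mul_of_nonneg_right hcRμ ha2nn,
      mul_le_mul_of_nonneg_right hcRk hb2nn, hLam, hupper, hsplitU]
  refine ⟨?_, hfinR⟩
  -- ## lower bound
  have hUjdef : ∀ j, (D j) *ᵥ ((1 - π j) *ᵥ ((R j) *ᵥ U))
      = D j *ᵥ (R j *ᵥ U) - D j *ᵥ (π j *ᵥ (R j *ᵥ U)) := by
    intro j; rw [sub_mulVec, one_mulVec, mulVec_sub]
  have hdecomp : (∑ j, (R j)ᵀ *ᵥ (D j *ᵥ (π j *ᵥ (R j *ᵥ U))))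
      + ∑ j, (R j)ᵀ *ᵥ ((D j) *ᵥ ((1 - π j) *ᵥ ((R j) *ᵥ U))) = U := by
    rw [← Finset.sum_add_distrib]
    have h1 : ∀ j ∈ Finset.univ, (R j)ᵀ *ᵥ (D j *ᵥ (π j *ᵥ (R j *ᵥ U)))
        + (R j)ᵀ *ᵥ ((D j) *ᵥ ((1 - π j) *ᵥ ((R j) *ᵥ U)))
        = ((R j)ᵀ * D j * R j) *ᵥ U := by
      intro j _
      have hsum : D j *ᵥ (π j *ᵥ (R j *ᵥ U))
          + (D j *ᵥ (R j *ᵥ U) - D j *ᵥ (π j *ᵥ (R j *ᵥ U))) = D j *ᵥ (R j *ᵥ U) := by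
        abel
      rw [hUjdef j, ← mulVec_add, hsum, mulVec_mulVec, mulVec_mulVec]
    rw [Finset.sum_congr rfl h1, ← sum_mulVec', hPOU, one_mulVec]
  have hzZ : ∃ γ : Fin m → ℝ,
      (∑ j, (R j)ᵀ *ᵥ (D j *ᵥ (π j *ᵥ (R j *ᵥ U)))) = Z *ᵥ γ := by
    have hterm : ∀ j : Fin N, ∃ γj, (R j)ᵀ *ᵥ (D j *ᵥ (π j *ᵥ (R j *ᵥ U))) = Z *ᵥ γj := by
      intro j
      obtain ⟨γj, hγj⟩ := hπV₀ j (R j *ᵥ U)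
      have hγj' : Z *ᵥ γj = ((R j)ᵀ * D j * π j) *ᵥ (R j *ᵥ U) := hγj
      refine ⟨γj, ?_⟩
      rw [hγj', mulVec_mulVec, mulVec_mulVec]
    choose γf hγf using hterm
    exact ⟨∑ j, γf j, by
      rw [Finset.sum_congr rfl (fun j _ => hγf j), ← mulVec_sum']⟩
  obtain ⟨γ, hγ⟩ := hzZ
  set z : Fin n → ℝ := ∑ j, (R j)ᵀ *ᵥ (D j *ᵥ (π j *ᵥ (R j *ᵥ U))) with hzdef
  set W0 : Fin m → ℝ := γ + Et⁻¹ *ᵥ (Zᵀ *ᵥ (A *ᵥ (U - z))) with hW0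
  have hz'eq : Z *ᵥ W0 = z + (Z * Et⁻¹ * Zᵀ) *ᵥ (A *ᵥ (U - z)) := by
    rw [hW0, mulVec_add, ← hγ]
    congr 1
    conv_rhs => rw [← mulVec_mulVec, ← mulVec_mulVec]
  -- Cauchy–Schwarz pieces
  have hc0 : ((Zᵀ *ᵥ w) ⬝ᵥ W0) ^ 2
      ≤ ((Et⁻¹ *ᵥ (Zᵀ *ᵥ w)) ⬝ᵥ (Zᵀ *ᵥ w)) * ((Et *ᵥ W0) ⬝ᵥ W0) := by
    have h1 := cs_psd hEt.posSemidef (Et⁻¹ *ᵥ (Zᵀ *ᵥ w)) W0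
    have h2 : Et *ᵥ (Et⁻¹ *ᵥ (Zᵀ *ᵥ w)) = Zᵀ *ᵥ w := by
      rw [mulVec_mulVec, hEtc, one_mulVec]
    rw [h2] at h1
    rwa [dotProduct_comm (Zᵀ *ᵥ w) (Et⁻¹ *ᵥ (Zᵀ *ᵥ w))] at h1
  have hcj : ∀ j, ((R j *ᵥ v) ⬝ᵥ ((D j) *ᵥ ((1 - π j) *ᵥ ((R j) *ᵥ U)))) ^ 2
      ≤ (((R j * A * (R j)ᵀ)⁻¹ *ᵥ (R j *ᵥ v)) ⬝ᵥ (R j *ᵥ v))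
        * (((R j * A * (R j)ᵀ) *ᵥ ((D j) *ᵥ ((1 - π j) *ᵥ ((R j) *ᵥ U)))) ⬝ᵥ
            ((D j) *ᵥ ((1 - π j) *ᵥ ((R j) *ᵥ U)))) := by
    intro j
    have h1 := cs_psd (hRARt j).posSemidef ((R j * A * (R j)ᵀ)⁻¹ *ᵥ (R j *ᵥ v))
      ((D j) *ᵥ ((1 - π j) *ᵥ ((R j) *ᵥ U)))
    have h2 : (R j * A * (R j)ᵀ) *ᵥ ((R j * A * (R j)ᵀ)⁻¹ *ᵥ (R j *ᵥ v)) = R j *ᵥ v := by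
      rw [mulVec_mulVec, hSc j, one_mulVec]
    rw [h2] at h1
    rwa [dotProduct_comm (R j *ᵥ v) ((R j * A * (R j)ᵀ)⁻¹ *ᵥ (R j *ᵥ v))] at h1
  -- numerator identity
  have hnum : (Zᵀ *ᵥ w) ⬝ᵥ W0
      + ∑ j, (R j *ᵥ v) ⬝ᵥ ((D j) *ᵥ ((1 - π j) *ᵥ ((R j) *ᵥ U))) = w ⬝ᵥ U := by
    have hc0w : (Zᵀ *ᵥ w) ⬝ᵥ W0 = w ⬝ᵥ (Z *ᵥ W0) := dp_move Z w W0
    have hsum1 : ∑ j, (R j *ᵥ v) ⬝ᵥ ((D j) *ᵥ ((1 - π j) *ᵥ ((R j) *ᵥ U)))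
        = v ⬝ᵥ (U - z) := by
      have h1 : ∀ j ∈ Finset.univ, (R j *ᵥ v) ⬝ᵥ ((D j) *ᵥ ((1 - π j) *ᵥ ((R j) *ᵥ U)))
          = v ⬝ᵥ ((R j)ᵀ *ᵥ ((D j) *ᵥ ((1 - π j) *ᵥ ((R j) *ᵥ U)))) := by
        intro j _
        rw [dp_move' (R j)]
      rw [Finset.sum_congr rfl h1, ← dotProduct_sum']
      congr 1
      exact (eq_sub_of_add_eq' hdecomp).symm ▸ rfl
    rw [hc0w, hsum1, hz'eq, dotProduct_add]
    have hv2 : v ⬝ᵥ (U - z) = w ⬝ᵥ (U - z) - (A *ᵥ ((Z * Et⁻¹ * Zᵀ) *ᵥ w)) ⬝ᵥ (U - z) := by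
      rw [hv, sub_dotProduct]
    have hQsym : (Z * Et⁻¹ * Zᵀ)ᵀ = Z * Et⁻¹ * Zᵀ := by
      simp [transpose_mul, hEtinvsym, Matrix.mul_assoc]
    have hcancel : w ⬝ᵥ ((Z * Et⁻¹ * Zᵀ) *ᵥ (A *ᵥ (U - z)))
        = (A *ᵥ ((Z * Et⁻¹ * Zᵀ) *ᵥ w)) ⬝ᵥ (U - z) := by
      calc w ⬝ᵥ ((Z * Et⁻¹ * Zᵀ) *ᵥ (A *ᵥ (U - z)))
          = ((Z * Et⁻¹ * Zᵀ)ᵀ *ᵥ w) ⬝ᵥ (A *ᵥ (U - z)) := (dp_move _ _ _).symm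
        _ = ((Z * Et⁻¹ * Zᵀ) *ᵥ w) ⬝ᵥ (A *ᵥ (U - z)) := by rw [hQsym]
        _ = (A *ᵥ ((Z * Et⁻¹ * Zᵀ) *ᵥ w)) ⬝ᵥ (U - z) := dp_Amove hAsym _ _
    rw [hv2, hcancel]
    have hws : w ⬝ᵥ (U - z) = w ⬝ᵥ U - w ⬝ᵥ z := dotProduct_sub _ _ _
    rw [hws]
    ring
  -- coarse denominator bound
  have he0 : μ' * ((Et *ᵥ W0) ⬝ᵥ W0) ≤ (A *ᵥ (Z *ᵥ W0)) ⬝ᵥ (Z *ᵥ W0) := by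
    have h1 := (hEμ W0).1
    have hstep : Zᵀ *ᵥ (A *ᵥ (Z *ᵥ W0)) = (Zᵀ * A * Z) *ᵥ W0 := by
      rw [mulVec_mulVec, mulVec_mulVec]
    have h2 : ((Zᵀ * A * Z) *ᵥ W0) ⬝ᵥ W0 = (A *ᵥ (Z *ᵥ W0)) ⬝ᵥ (Z *ᵥ W0) := by
      rw [← hstep]
      exact dp_move Z _ _
    rw [← h2]
    exact h1
  -- bound on the A-norm of Z*W0
  have hUz : aNorm A (U - z) ≤ Real.sqrt (k₀ * k₁ * τ) * aNorm A U := by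
    apply aNorm_le_of_sq_le hApsd (mul_nonneg (Real.sqrt_nonneg _) (aNorm_nonneg _))
    have hexp : (Real.sqrt (k₀ * k₁ * τ) * aNorm A U) ^ 2
        = (k₀ * k₁ * τ) * ((A *ᵥ U) ⬝ᵥ U) := by
      rw [mul_pow, Real.sq_sqrt (by positivity), aNorm_sq hApsd]
    rw [hexp]
    have hUzS : U - z = ∑ j, (R j)ᵀ *ᵥ ((D j) *ᵥ ((1 - π j) *ᵥ ((R j) *ᵥ U))) :=
      (eq_sub_of_add_eq' hdecomp).symm
    rw [hUzS]
    have hb := hk₀bound (fun j => (D j) *ᵥ ((1 - π j) *ᵥ ((R j) *ᵥ U)))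
    have heq : ∀ j ∈ Finset.univ,
        (A *ᵥ ((R j)ᵀ *ᵥ ((D j) *ᵥ ((1 - π j) *ᵥ ((R j) *ᵥ U))))) ⬝ᵥ
          ((R j)ᵀ *ᵥ ((D j) *ᵥ ((1 - π j) *ᵥ ((R j) *ᵥ U))))
        = ((R j * A * (R j)ᵀ) *ᵥ ((D j) *ᵥ ((1 - π j) *ᵥ ((R j) *ᵥ U)))) ⬝ᵥ
            ((D j) *ᵥ ((1 - π j) *ᵥ ((R j) *ᵥ U))) := fun j _ => rar A (R j) _
    calc (A *ᵥ (∑ j, (R j)ᵀ *ᵥ ((D j) *ᵥ ((1 - π j) *ᵥ ((R j) *ᵥ U))))) ⬝ᵥ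
          (∑ j, (R j)ᵀ *ᵥ ((D j) *ᵥ ((1 - π j) *ᵥ ((R j) *ᵥ U))))
        ≤ k₀ * ∑ j, (A *ᵥ ((R j)ᵀ *ᵥ ((D j) *ᵥ ((1 - π j) *ᵥ ((R j) *ᵥ U))))) ⬝ᵥ
            ((R j)ᵀ *ᵥ ((D j) *ᵥ ((1 - π j) *ᵥ ((R j) *ᵥ U)))) := hb
      _ = k₀ * ∑ j, ((R j * A * (R j)ᵀ) *ᵥ ((D j) *ᵥ ((1 - π j) *ᵥ ((R j) *ᵥ U)))) ⬝ᵥ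
            ((D j) *ᵥ ((1 - π j) *ᵥ ((R j) *ᵥ U))) := by
          rw [Finset.sum_congr rfl heq]
      _ ≤ k₀ * (k₁ * τ * ((A *ᵥ U) ⬝ᵥ U)) :=
          mul_le_mul_of_nonneg_left (hGenEO U) hk₀.le
      _ = (k₀ * k₁ * τ) * ((A *ᵥ U) ⬝ᵥ U) := by ring
  have hgle : aNorm A (prj (U - z)) ≤ aNorm A (U - z) := by
    apply aNorm_le_of_sq_le hApsd (aNorm_nonneg _)
    rw [aNorm_sq hApsd]
    exact hprj_contract _
  have hz'form : Z *ᵥ W0 = prj U - Dm *ᵥ (prj (U - z)) := by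
    have h1 : Dm *ᵥ (U - z) = Dm *ᵥ (prj (U - z)) := by
      have h := hDmkill (U - z)
      rw [mulVec_sub] at h
      exact sub_eq_zero.mp h
    have h2 : Dm *ᵥ (U - z) = prj (U - z) - (Z * Et⁻¹ * Zᵀ) *ᵥ (A *ᵥ (U - z)) := hDmx _
    have h3 : prj (U - z) = prj U - z := by
      rw [hprjsub, hγ, hprjZ]
    rw [hz'eq, ← h1, h2, h3]
    abel
  have hz'le : aNorm A (Z *ᵥ W0) ≤ (1 + εA * Real.sqrt (k₀ * k₁ * τ)) * aNorm A U := by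
    rw [hz'form]
    have h1 := aNorm_sub_le hApsd hAsym (prj U) (Dm *ᵥ (prj (U - z)))
    have h2 : aNorm A (prj U) ≤ aNorm A U := by
      apply aNorm_le_of_sq_le hApsd (aNorm_nonneg _)
      rw [aNorm_sq hApsd]
      exact hprj_contract U
    have h3 : aNorm A (Dm *ᵥ (prj (U - z))) ≤ εA * (Real.sqrt (k₀ * k₁ * τ) * aNorm A U) := by
      calc aNorm A (Dm *ᵥ (prj (U - z))) ≤ εA * aNorm A (prj (U - z)) := hεb _
        _ ≤ εA * aNorm A (U - z) := mul_le_mul_of_nonneg_left hgle hε0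
        _ ≤ εA * (Real.sqrt (k₀ * k₁ * τ) * aNorm A U) :=
            mul_le_mul_of_nonneg_left hUz hε0
    calc aNorm A (prj U - Dm *ᵥ (prj (U - z)))
        ≤ aNorm A (prj U) + aNorm A (Dm *ᵥ (prj (U - z))) := h1
      _ ≤ aNorm A U + εA * (Real.sqrt (k₀ * k₁ * τ) * aNorm A U) := add_le_add h2 h3
      _ = (1 + εA * Real.sqrt (k₀ * k₁ * τ)) * aNorm A U := by ring
  have hz'sq : (A *ᵥ (Z *ᵥ W0)) ⬝ᵥ (Z *ᵥ W0)
      ≤ (1 + εA * Real.sqrt (k₀ * k₁ * τ)) ^ 2 * (w ⬝ᵥ U) := by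
    have h2 := pow_le_pow_left₀ (aNorm_nonneg (A := A) (Z *ᵥ W0)) hz'le 2
    rw [aNorm_sq hApsd, mul_pow, aNorm_sq hApsd, ← hw] at h2
    exact h2
  -- assemble the lower bound
  have hT1nn : 0 ≤ (Et⁻¹ *ᵥ (Zᵀ *ᵥ w)) ⬝ᵥ (Zᵀ *ᵥ w) := dp_self_nonneg hEt.posSemidef.inv _
  have he0nn : 0 ≤ (Et *ᵥ W0) ⬝ᵥ W0 := dp_self_nonneg hEt.posSemidef _
  have hejnn : ∀ j ∈ Finset.univ, (0:ℝ)
      ≤ ((R j * A * (R j)ᵀ) *ᵥ ((D j) *ᵥ ((1 - π j) *ᵥ ((R j) *ᵥ U)))) ⬝ᵥ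
          ((D j) *ᵥ ((1 - π j) *ᵥ ((R j) *ᵥ U))) :=
    fun j _ => dp_self_nonneg (hRARt j).posSemidef _
  have htjnn : ∀ j ∈ Finset.univ, (0:ℝ)
      ≤ ((R j * A * (R j)ᵀ)⁻¹ *ᵥ (R j *ᵥ v)) ⬝ᵥ (R j *ᵥ v) :=
    fun j _ => dp_self_nonneg (hRARt j).posSemidef.inv _
  have hsumcs : (∑ j, (R j *ᵥ v) ⬝ᵥ ((D j) *ᵥ ((1 - π j) *ᵥ ((R j) *ᵥ U)))) ^ 2
      ≤ (∑ j, ((R j * A * (R j)ᵀ)⁻¹ *ᵥ (R j *ᵥ v)) ⬝ᵥ (R j *ᵥ v))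
        * (∑ j, ((R j * A * (R j)ᵀ) *ᵥ ((D j) *ᵥ ((1 - π j) *ᵥ ((R j) *ᵥ U)))) ⬝ᵥ
            ((D j) *ᵥ ((1 - π j) *ᵥ ((R j) *ᵥ U)))) :=
    cs_sum Finset.univ _ _ _ htjnn hejnn (fun j _ => hcj j)
  have hcs_all : ((Zᵀ *ᵥ w) ⬝ᵥ W0
        + ∑ j, (R j *ᵥ v) ⬝ᵥ ((D j) *ᵥ ((1 - π j) *ᵥ ((R j) *ᵥ U)))) ^ 2
      ≤ ((Et⁻¹ *ᵥ (Zᵀ *ᵥ w)) ⬝ᵥ (Zᵀ *ᵥ w)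
          + ∑ i, ((R i * A * (R i)ᵀ)⁻¹ *ᵥ (R i *ᵥ v)) ⬝ᵥ (R i *ᵥ v))
        * ((Et *ᵥ W0) ⬝ᵥ W0
          + ∑ j, ((R j * A * (R j)ᵀ) *ᵥ ((D j) *ᵥ ((1 - π j) *ᵥ ((R j) *ᵥ U)))) ⬝ᵥ
              ((D j) *ᵥ ((1 - π j) *ᵥ ((R j) *ᵥ U)))) :=
    cs2 hT1nn he0nn (Finset.sum_nonneg htjnn) (Finset.sum_nonneg hejnn) hc0 hsumcs
  rw [hnum, hMain] at hcs_all
  have hlamnn : 0 ≤ lam * (w ⬝ᵥ U) := by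
    rw [← hMain]
    exact add_nonneg hT1nn (Finset.sum_nonneg htjnn)
  have hden : (Et *ᵥ W0) ⬝ᵥ W0
      + ∑ j, ((R j * A * (R j)ᵀ) *ᵥ ((D j) *ᵥ ((1 - π j) *ᵥ ((R j) *ᵥ U)))) ⬝ᵥ
          ((D j) *ᵥ ((1 - π j) *ᵥ ((R j) *ᵥ U)))
      ≤ ((1 + εA * Real.sqrt (k₀ * k₁ * τ)) ^ 2 / μ' + k₁ * τ) * (w ⬝ᵥ U) := by
    have h1 : (Et *ᵥ W0) ⬝ᵥ W0
        ≤ (1 + εA * Real.sqrt (k₀ * k₁ * τ)) ^ 2 / μ' * (w ⬝ᵥ U) := by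
      rw [div_mul_eq_mul_div, le_div_iff₀ hμ']
      nlinarith [he0, hz'sq]
    have h2 : ∑ j, ((R j * A * (R j)ᵀ) *ᵥ ((D j) *ᵥ ((1 - π j) *ᵥ ((R j) *ᵥ U)))) ⬝ᵥ
          ((D j) *ᵥ ((1 - π j) *ᵥ ((R j) *ᵥ U))) ≤ k₁ * τ * (w ⬝ᵥ U) := by
      have h := hGenEO U
      rw [← hw] at h
      exact h
    have hre : ((1 + εA * Real.sqrt (k₀ * k₁ * τ)) ^ 2 / μ' + k₁ * τ) * (w ⬝ᵥ U)
        = (1 + εA * Real.sqrt (k₀ * k₁ * τ)) ^ 2 / μ' * (w ⬝ᵥ U) + k₁ * τ * (w ⬝ᵥ U) := by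
      ring
    rw [hre]
    exact add_le_add h1 h2
  have hkey : (w ⬝ᵥ U) ^ 2
      ≤ lam * ((1 + εA * Real.sqrt (k₀ * k₁ * τ)) ^ 2 / μ' + k₁ * τ) * (w ⬝ᵥ U) ^ 2 := by
    calc (w ⬝ᵥ U) ^ 2
        ≤ (lam * (w ⬝ᵥ U)) * ((Et *ᵥ W0) ⬝ᵥ W0
          + ∑ j, ((R j * A * (R j)ᵀ) *ᵥ ((D j) *ᵥ ((1 - π j) *ᵥ ((R j) *ᵥ U)))) ⬝ᵥ
              ((D j) *ᵥ ((1 - π j) *ᵥ ((R j) *ᵥ U)))) := hcs_all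
      _ ≤ (lam * (w ⬝ᵥ U)) * (((1 + εA * Real.sqrt (k₀ * k₁ * τ)) ^ 2 / μ' + k₁ * τ)
            * (w ⬝ᵥ U)) := mul_le_mul_of_nonneg_left hden hlamnn
      _ = lam * ((1 + εA * Real.sqrt (k₀ * k₁ * τ)) ^ 2 / μ' + k₁ * τ) * (w ⬝ᵥ U) ^ 2 := by
          ring
  have h1 : 1 ≤ lam * ((1 + εA * Real.sqrt (k₀ * k₁ * τ)) ^ 2 / μ' + k₁ * τ) := by
    have hΛ2 : 0 < (w ⬝ᵥ U) ^ 2 := by positivity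
    nlinarith [hkey, hΛ2]
  rw [hcT]
  have hdpos : 0 < (1 + εA * Real.sqrt (k₀ * k₁ * τ)) ^ 2 + μ' * k₁ * τ := by
    have : (0:ℝ) < μ' * k₁ * τ := by positivity
    nlinarith [sq_nonneg (1 + εA * Real.sqrt (k₀ * k₁ * τ))]
  rw [div_le_iff₀ hdpos]
  have hmul := mul_le_mul_of_nonneg_left h1 hμ'.le
  have heq : μ' * (lam * ((1 + εA * Real.sqrt (k₀ * k₁ * τ)) ^ 2 / μ' + k₁ * τ))
      = lam * ((1 + εA * Real.sqrt (k₀ * k₁ * τ)) ^ 2 + μ' * k₁ * τ) := by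
    calc μ' * (lam * ((1 + εA * Real.sqrt (k₀ * k₁ * τ)) ^ 2 / μ' + k₁ * τ))
        = lam * ((1 + εA * Real.sqrt (k₀ * k₁ * τ)) ^ 2 / μ' * μ' + μ' * (k₁ * τ)) := by
          ring
      _ = lam * ((1 + εA * Real.sqrt (k₀ * k₁ * τ)) ^ 2 + μ' * k₁ * τ) := by
          rw [div_mul_cancel₀ _ hμ'.ne']
          ring
  rw [heq] at hmul
  linarith [hmul]
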